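/- Let ε > 0, f : ℝ → ℂ continuous, f ∈ L_p(ℝ) with 0 < p < ∞, and suppose there is a sequence x_n → ∞ with |f(x_n)| ≥ ε for all n. Then there exist sequences (u_k) and (y_k) with u_k → ∞, u_k < y_k, |f(u_k)| ≥ ε, |f(y_k)| = ε/2, |f(x)| ≥ ε/2 for all x ∈ [u_k, y_k], and the intervals [u_k, y_k] pairwise disjoint; consequently (ε/2)^p ∑_k (y_k − u_k) ≤ ‖f‖_{L_p(ℝ)}^p, so y_k − u_k → 0. -/

import Mathlib

open MeasureTheory Filter
open scoped ENNReal

/-- Auxiliary: to the right of any point where `‖f‖ ≥ ε`, there is a first point where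
`‖f‖ = ε/2`, with `‖f‖ ≥ ε/2` in between. -/
theorem covering_construction_key
    (ε : ℝ) (hε : 0 < ε)
    (f : ℝ → ℂ) (hf : Continuous f)
    (p : ℝ) (hp : 0 < p)
    (hLp : ∫⁻ x : ℝ, (‖f x‖₊ : ℝ≥0∞) ^ p < ∞) :
    ∀ u : ℝ, ε ≤ ‖f u‖ → ∃ y, u < y ∧ ‖f y‖ = ε/2 ∧ ∀ t ∈ Set.Icc u y, ε/2 ≤ ‖f t‖ := by
  intro u hu
  set S := {t : ℝ | u ≤ t ∧ ‖f t‖ ≤ ε/2} with hSdef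
  have hSclosed : IsClosed S := by
    have : S = Set.Ici u ∩ (fun t => ‖f t‖) ⁻¹' Set.Iic (ε/2) := rfl
    rw [this]
    exact isClosed_Ici.inter ((isClosed_Iic).preimage (hf.norm))
  have hS : S.Nonempty := by
    by_contra h
    have hlt : ∀ t, u ≤ t → ε/2 < ‖f t‖ := by
      intro t ht
      by_contra hle
      exact h ⟨t, ht, not_lt.1 hle⟩
    have hge : ∀ t ∈ Set.Ici u, ENNReal.ofReal ((ε/2)^p) ≤ (‖f t‖₊ : ℝ≥0∞) ^ p := by
      intro t ht
      rw [← ENNReal.ofReal_rpow_of_pos (half_pos hε)]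
      apply ENNReal.rpow_le_rpow _ hp.le
      rw [← enorm_eq_nnnorm, ← ofReal_norm]
      exact ENNReal.ofReal_le_ofReal (hlt t ht).le
    have htop : (⊤ : ℝ≥0∞) ≤ ∫⁻ t : ℝ, (‖f t‖₊ : ℝ≥0∞) ^ p := by
      calc (⊤ : ℝ≥0∞) = ENNReal.ofReal ((ε/2)^p) * volume (Set.Ici u) := by
            rw [Real.volume_Ici, ENNReal.mul_top]
            simp [ENNReal.ofReal_eq_zero, not_le, Real.rpow_natCast]
            positivity
        _ = ∫⁻ _ in Set.Ici u, ENNReal.ofReal ((ε/2)^p) := (setLIntegral_const _ _).symm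
        _ ≤ ∫⁻ t in Set.Ici u, (‖f t‖₊ : ℝ≥0∞) ^ p := setLIntegral_mono (by fun_prop) hge
        _ ≤ ∫⁻ t : ℝ, (‖f t‖₊ : ℝ≥0∞) ^ p := setLIntegral_le_lintegral _ _
    exact absurd (lt_of_le_of_lt htop hLp) (by simp)
  have hbdd : BddBelow S := ⟨u, fun t ht => ht.1⟩
  set y := sInf S with hy
  have hymem : y ∈ S := hSclosed.csInf_mem hS hbdd
  have huy : u < y := by
    rcases lt_or_eq_of_le hymem.1 with h | h
    · exact h
    · exfalso
      have := hymem.2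
      rw [← h] at this
      linarith
  have hIco : ∀ t ∈ Set.Ico u y, ε/2 ≤ ‖f t‖ := by
    intro t ⟨ht1, ht2⟩
    by_contra hle
    exact absurd (csInf_le hbdd ⟨ht1, (not_le.1 hle).le⟩) (not_le.2 ht2)
  have hfy : ε/2 ≤ ‖f y‖ := by
    have hclosed : IsClosed {t : ℝ | ε/2 ≤ ‖f t‖} := isClosed_le continuous_const hf.norm
    have hsub : Set.Ico u y ⊆ {t : ℝ | ε/2 ≤ ‖f t‖} := hIco
    have : y ∈ closure (Set.Ico u y) := by
      rw [closure_Ico huy.ne]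
      exact Set.right_mem_Icc.2 huy.le
    exact hclosed.closure_subset ((closure_mono hsub).trans (by rw [hclosed.closure_eq]) this)
  refine ⟨y, huy, le_antisymm hymem.2 hfy, ?_⟩
  intro t ⟨ht1, ht2⟩
  rcases lt_or_eq_of_le ht2 with h | h
  · exact hIco t ⟨ht1, h⟩
  · rw [h]; exact hfy

/-- the covering/intermediate-value construction from the proof of
Lemma 2.1(b). -/
theorem covering_construction
    (ε : ℝ) (hε : 0 < ε)
    (f : ℝ → ℂ) (hf : Continuous f)
    (p : ℝ) (hp : 0 < p)
    (hLp : ∫⁻ x : ℝ, (‖f x‖₊ : ℝ≥0∞) ^ p < ∞)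
    (x : ℕ → ℝ) (hx : Tendsto x atTop atTop)
    (hfx : ∀ n, ε ≤ ‖f (x n)‖) :
    ∃ u y : ℕ → ℝ,
      Tendsto u atTop atTop ∧
      (∀ k, u k < y k) ∧
      (∀ k, ε ≤ ‖f (u k)‖) ∧
      (∀ k, ‖f (y k)‖ = ε / 2) ∧
      (∀ k, ∀ t ∈ Set.Icc (u k) (y k), ε / 2 ≤ ‖f t‖) ∧
      (Pairwise fun i j => Disjoint (Set.Icc (u i) (y i)) (Set.Icc (u j) (y j))) ∧
      (ENNReal.ofReal ((ε / 2) ^ p) * ∑' k, ENNReal.ofReal (y k - u k)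
        ≤ ∫⁻ t : ℝ, (‖f t‖₊ : ℝ≥0∞) ^ p) ∧
      Tendsto (fun k => y k - u k) atTop (nhds 0) := by
  have key := covering_construction_key ε hε f hf p hp hLp
  have hstep : ∀ b : ℝ, ∃ uv : ℝ × ℝ, b < uv.1 ∧ uv.1 < uv.2 ∧ ε ≤ ‖f uv.1‖ ∧
      ‖f uv.2‖ = ε/2 ∧ ∀ t ∈ Set.Icc uv.1 uv.2, ε/2 ≤ ‖f t‖ := by
    intro b
    obtain ⟨n, hn⟩ := (hx.eventually_gt_atTop b).exists
    obtain ⟨yy, h1, h2, h3⟩ := key (x n) (hfx n)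
    exact ⟨(x n, yy), hn, h1, hfx n, h2, h3⟩
  choose P hbP hP2 hεP hPy hPicc using hstep
  set b : ℕ → ℝ := fun k => Nat.rec (0:ℝ) (fun k bk => max (P bk).2 ((k:ℝ)+1)) k with hb
  set u : ℕ → ℝ := fun k => (P (b k)).1 with hu
  set y : ℕ → ℝ := fun k => (P (b k)).2 with hy
  have hbsucc : ∀ k, b (k+1) = max (y k) ((k:ℝ)+1) := fun k => rfl
  have hbk : ∀ k : ℕ, (k:ℝ) ≤ b k := by
    intro k
    cases k with
    | zero => simp [hb]
    | succ k => rw [hbsucc]; push_cast; exact le_max_right _ _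
  have hbu : ∀ k, b k < u k := fun k => hbP (b k)
  have huy : ∀ k, u k < y k := fun k => hP2 (b k)
  have hyu : ∀ k, y k < u (k+1) := fun k =>
    lt_of_le_of_lt (le_max_left _ _) (by rw [← hbsucc]; exact hbu (k+1))
  have htu : Tendsto u atTop atTop :=
    tendsto_atTop_mono (fun k => ((hbk k).trans (hbu k).le)) tendsto_natCast_atTop_atTop
  have hchain : ∀ i j, i < j → y i < u j := by
    intro i j hij
    induction j with
    | zero => omega
    | succ j ih =>
      rcases Nat.lt_succ_iff_lt_or_eq.1 hij with h | h
      · exact (ih h).trans ((huy j).trans (hyu j))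
      · subst h; exact hyu i
  have hdisj : ∀ i j, i < j → Disjoint (Set.Icc (u i) (y i)) (Set.Icc (u j) (y j)) := by
    intro i j hij
    apply Set.disjoint_left.2
    intro t ht ht'
    exact absurd (ht.2.trans_lt ((hchain i j hij).trans_le ht'.1)) (lt_irrefl t)
  have hpair : Pairwise fun i j => Disjoint (Set.Icc (u i) (y i)) (Set.Icc (u j) (y j)) := by
    intro i j hij
    rcases lt_or_gt_of_ne hij with h | h
    · exact hdisj i j h
    · exact (hdisj j i h).symm
  set c := ENNReal.ofReal ((ε/2)^p) with hc
  have hc0 : c ≠ 0 := by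
    simp only [hc, ne_eq, ENNReal.ofReal_eq_zero, not_le]
    positivity
  have h1 : ∀ k, c * ENNReal.ofReal (y k - u k) ≤
      ∫⁻ t in Set.Icc (u k) (y k), (‖f t‖₊ : ℝ≥0∞) ^ p := by
    intro k
    calc c * ENNReal.ofReal (y k - u k) = c * volume (Set.Icc (u k) (y k)) := by
          rw [Real.volume_Icc]
      _ = ∫⁻ _ in Set.Icc (u k) (y k), c := (setLIntegral_const _ _).symm
      _ ≤ ∫⁻ t in Set.Icc (u k) (y k), (‖f t‖₊ : ℝ≥0∞) ^ p := by
          apply setLIntegral_mono (by fun_prop)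
          intro t ht
          rw [hc, ← ENNReal.ofReal_rpow_of_pos (half_pos hε)]
          apply ENNReal.rpow_le_rpow _ hp.le
          rw [← enorm_eq_nnnorm, ← ofReal_norm]
          exact ENNReal.ofReal_le_ofReal (hPicc (b k) t ht)
  have h2 : ∑' k, ∫⁻ t in Set.Icc (u k) (y k), (‖f t‖₊ : ℝ≥0∞) ^ p ≤
      ∫⁻ t : ℝ, (‖f t‖₊ : ℝ≥0∞) ^ p := by
    rw [← lintegral_iUnion (fun k => measurableSet_Icc) (fun i j hij => hpair hij)]
    exact setLIntegral_le_lintegral _ _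
  have hbound : c * ∑' k, ENNReal.ofReal (y k - u k) ≤ ∫⁻ t : ℝ, (‖f t‖₊ : ℝ≥0∞) ^ p := by
    rw [← ENNReal.tsum_mul_left]
    exact le_trans (ENNReal.tsum_le_tsum h1) h2
  have hTne : ∑' k, ENNReal.ofReal (y k - u k) ≠ ⊤ := by
    intro hT
    rw [hT, ENNReal.mul_top hc0] at hbound
    exact absurd (lt_of_le_of_lt hbound hLp) (by simp)
  have htend0 : Tendsto (fun k => ENNReal.ofReal (y k - u k)) atTop (nhds 0) :=
    ENNReal.tendsto_atTop_zero_of_tsum_ne_top hTne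
  have htendR : Tendsto (fun k => y k - u k) atTop (nhds 0) := by
    have := (ENNReal.tendsto_toReal (by simp : (0:ℝ≥0∞) ≠ ⊤)).comp htend0
    simp only [ENNReal.toReal_zero] at this
    convert this using 1
    funext k
    simp only [Function.comp_apply, ENNReal.toReal_ofReal (by linarith [huy k] : (0:ℝ) ≤ y k - u k)]
  exact ⟨u, y, htu, huy, fun k => hεP (b k), fun k => hPy (b k), fun k => hPicc (b k),
    hpair, hbound, htendR⟩
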